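/- (Theorem 3.1) Let f : ℝ × ℝ^d → ℝ^d be continuous and suppose the coefficient functions Ā : [0,1]×[0,1] → ℝ and B̄, B, C : [0,1] → ℝ satisfy the symmetry conditions: C(τ) = 1 − C(1−τ), Ā(τ,σ) = B(1−σ)(1 − C(1−τ)) − B̄(1−σ) + Ā(1−τ,1−σ), B̄(τ) = B(1−τ) − B̄(1−τ), and B(τ) = B(1−τ), for all τ, σ ∈ [0,1]. Then the csRKN method is symmetric in the following sense: if a continuous Q : [0,1] → ℝ^d and (q₁,q₁') satisfy the csRKN equations with step size h and initial data (t₀,q₀,q₀'), then the function τ ↦ Q(1−τ) together with outputs (q₀,q₀') satisfies the csRKN equations with the same coefficients, step size −h, and initial data (t₀+h, q₁, q₁'). -/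

import Mathlib

open Set MeasureTheory

noncomputable section

/-- The csRKN equations (see CONTEXT): stage function `Q`, outputs `(q₁, q₁')`. -/
def csRKN {d : ℕ} (f : ℝ → (Fin d → ℝ) → (Fin d → ℝ))
    (Abar : ℝ → ℝ → ℝ) (Bbar B C : ℝ → ℝ)
    (h t₀ : ℝ) (q₀ q₀' : Fin d → ℝ)
    (Q : ℝ → Fin d → ℝ) (q₁ q₁' : Fin d → ℝ) : Prop :=
  (∀ τ ∈ Set.Icc (0:ℝ) 1,
      Q τ = q₀ + (h * C τ) • q₀' +
        h ^ 2 • ∫ σ in (0:ℝ)..1, Abar τ σ • f (t₀ + C σ * h) (Q σ)) ∧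
  q₁ = q₀ + h • q₀' + h ^ 2 • ∫ τ in (0:ℝ)..1, Bbar τ • f (t₀ + C τ * h) (Q τ) ∧
  q₁' = q₀' + h • ∫ τ in (0:ℝ)..1, B τ • f (t₀ + C τ * h) (Q τ)

/-- Theorem 3.1: if the coefficients satisfy the symmetry conditions,
then the csRKN method is symmetric: whenever `Q, (q₁,q₁')` solve the csRKN equations
with step size `h` and data `(t₀,q₀,q₀')`, the reversed stage function `τ ↦ Q(1-τ)`
together with outputs `(q₀,q₀')` solves the csRKN equations with the same coefficients,
step size `-h` and data `(t₀+h, q₁, q₁')`. -/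
theorem csRKN_symmetric {d : ℕ} (f : ℝ → (Fin d → ℝ) → (Fin d → ℝ))
    (hf : Continuous fun p : ℝ × (Fin d → ℝ) => f p.1 p.2)
    (Abar : ℝ → ℝ → ℝ) (Bbar B C : ℝ → ℝ)
    (hAc : Continuous fun p : ℝ × ℝ => Abar p.1 p.2)
    (hBbarc : Continuous Bbar) (hBc : Continuous B) (hCc : Continuous C)
    (hsymC : ∀ τ ∈ Set.Icc (0:ℝ) 1, C τ = 1 - C (1 - τ))
    (hsymA : ∀ τ ∈ Set.Icc (0:ℝ) 1, ∀ σ ∈ Set.Icc (0:ℝ) 1,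
      Abar τ σ = B (1 - σ) * (1 - C (1 - τ)) - Bbar (1 - σ) + Abar (1 - τ) (1 - σ))
    (hsymBbar : ∀ τ ∈ Set.Icc (0:ℝ) 1, Bbar τ = B (1 - τ) - Bbar (1 - τ))
    (hsymB : ∀ τ ∈ Set.Icc (0:ℝ) 1, B τ = B (1 - τ))
    (h t₀ : ℝ) (q₀ q₀' q₁ q₁' : Fin d → ℝ)
    (Q : ℝ → Fin d → ℝ) (hQ : ContinuousOn Q (Set.Icc 0 1))
    (hmethod : csRKN f Abar Bbar B C h t₀ q₀ q₀' Q q₁ q₁') :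
    csRKN f Abar Bbar B C (-h) (t₀ + h) q₁ q₁' (fun τ => Q (1 - τ)) q₀ q₀' := by
  obtain ⟨hstage, hq1, hq1'⟩ := hmethod
  set g : ℝ → Fin d → ℝ := fun σ => f (t₀ + C σ * h) (Q σ) with hg
  have hgc : ContinuousOn g (Icc 0 1) :=
    hf.comp_continuousOn
      (((continuous_const.add (hCc.mul continuous_const)).continuousOn).prodMk hQ)
  have huIcc : uIcc (0:ℝ) 1 = Icc 0 1 := uIcc_of_le zero_le_one
  have hint : ∀ w : ℝ → ℝ, ContinuousOn w (Icc 0 1) →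
      IntervalIntegrable (fun σ => w σ • g σ) MeasureTheory.volume 0 1 := by
    intro w hw
    apply ContinuousOn.intervalIntegrable
    rw [huIcc]
    exact hw.smul hgc
  have htime : ∀ σ ∈ Icc (0:ℝ) 1, f ((t₀ + h) + C σ * (-h)) (Q (1 - σ)) = g (1 - σ) := by
    intro σ hσ
    have hc := hsymC σ hσ
    simp only [hg]
    congr 1
    rw [hc]; ring
  have hflip : ∀ F : ℝ → Fin d → ℝ,
      (∫ σ in (0:ℝ)..1, F (1 - σ)) = ∫ σ in (0:ℝ)..1, F σ := by
    intro F
    simpa using intervalIntegral.integral_comp_sub_left F 1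
  -- mem lemma
  have hmem : ∀ σ ∈ Icc (0:ℝ) 1, (1 - σ) ∈ Icc (0:ℝ) 1 := by
    intro σ hσ; constructor <;> [linarith [hσ.2]; linarith [hσ.1]]
  have hIB := hint B hBc.continuousOn
  have hIBbar := hint Bbar hBbarc.continuousOn
  refine ⟨?_, ?_, ?_⟩
  · -- stage equation
    intro τ hτ
    have hcτ : C (1 - τ) = 1 - C τ := by have := hsymC τ hτ; linarith
    have step1 : (∫ σ in (0:ℝ)..1, Abar τ σ • f ((t₀ + h) + C σ * (-h)) (Q (1 - σ)))
        = ∫ σ in (0:ℝ)..1, Abar τ σ • g (1 - σ) := by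
      apply intervalIntegral.integral_congr
      intro σ hσ
      rw [huIcc] at hσ
      simp only [htime σ hσ]
    have step2 : (∫ σ in (0:ℝ)..1, Abar τ σ • g (1 - σ))
        = ∫ σ in (0:ℝ)..1, Abar τ (1 - σ) • g σ := by
      have := hflip (fun x => Abar τ (1 - x) • g x)
      simpa using this
    have step3 : (∫ σ in (0:ℝ)..1, Abar τ (1 - σ) • g σ)
        = ∫ σ in (0:ℝ)..1, (C τ • (B σ • g σ) - Bbar σ • g σ + Abar (1 - τ) σ • g σ) := by
      apply intervalIntegral.integral_congr
      intro σ hσ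
      rw [huIcc] at hσ
      show Abar τ (1 - σ) • g σ = C τ • (B σ • g σ) - Bbar σ • g σ + Abar (1 - τ) σ • g σ
      have hA := hsymA τ hτ (1 - σ) (hmem σ hσ)
      simp only [sub_sub_cancel] at hA
      rw [hA]
      have := hsymC τ hτ
      rw [show (1 : ℝ) - C (1 - τ) = C τ by linarith]
      rw [add_smul, sub_smul, mul_comm, mul_smul]
    have hIA := hint (Abar (1 - τ)) (hAc.comp (continuous_const.prodMk continuous_id)).continuousOn
    have hIB2 : IntervalIntegrable (fun σ => C τ • (B σ • g σ)) MeasureTheory.volume 0 1 := by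
      simpa [smul_smul] using hint (fun σ => C τ * B σ) (continuousOn_const.mul hBc.continuousOn)
    have step4 : (∫ σ in (0:ℝ)..1, (C τ • (B σ • g σ) - Bbar σ • g σ + Abar (1 - τ) σ • g σ))
        = C τ • (∫ σ in (0:ℝ)..1, B σ • g σ) - (∫ σ in (0:ℝ)..1, Bbar σ • g σ)
          + ∫ σ in (0:ℝ)..1, Abar (1 - τ) σ • g σ := by
      rw [intervalIntegral.integral_add (hIB2.sub hIBbar) hIA,
        intervalIntegral.integral_sub hIB2 hIBbar,
        intervalIntegral.integral_smul]
    have hst := hstage (1 - τ) (hmem τ hτ)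
    show Q (1 - τ) = q₁ + (-h * C τ) • q₁' + (-h) ^ 2 • _
    rw [step1, step2, step3, step4, hq1, hq1', hst, hcτ, neg_pow]
    set IA := ∫ σ in (0:ℝ)..1, Abar (1 - τ) σ • g σ
    set IB := ∫ σ in (0:ℝ)..1, B σ • g σ
    set IBbar := ∫ σ in (0:ℝ)..1, Bbar σ • g σ
    module
  · -- q₁ output
    have step1 : (∫ τ in (0:ℝ)..1, Bbar τ • f ((t₀ + h) + C τ * (-h)) (Q (1 - τ)))
        = ∫ τ in (0:ℝ)..1, Bbar τ • g (1 - τ) := by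
      apply intervalIntegral.integral_congr
      intro τ hτ
      rw [huIcc] at hτ
      simp only [htime τ hτ]
    have step2 : (∫ τ in (0:ℝ)..1, Bbar τ • g (1 - τ))
        = ∫ τ in (0:ℝ)..1, Bbar (1 - τ) • g τ := by
      have := hflip (fun x => Bbar (1 - x) • g x)
      simpa using this
    have step3 : (∫ τ in (0:ℝ)..1, Bbar (1 - τ) • g τ)
        = ∫ τ in (0:ℝ)..1, (B τ • g τ - Bbar τ • g τ) := by
      apply intervalIntegral.integral_congr
      intro τ hτ
      rw [huIcc] at hτ
      show Bbar (1 - τ) • g τ = B τ • g τ - Bbar τ • g τ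
      have h1 := hsymBbar τ hτ
      have h2 := hsymB τ hτ
      rw [show Bbar (1 - τ) = B τ - Bbar τ by linarith, sub_smul]
    have step4 : (∫ τ in (0:ℝ)..1, (B τ • g τ - Bbar τ • g τ))
        = (∫ τ in (0:ℝ)..1, B τ • g τ) - ∫ τ in (0:ℝ)..1, Bbar τ • g τ :=
      intervalIntegral.integral_sub hIB hIBbar
    show q₀ = q₁ + (-h) • q₁' + (-h) ^ 2 • _
    rw [step1, step2, step3, step4, hq1, hq1', neg_pow]
    set IB := ∫ σ in (0:ℝ)..1, B σ • g σ
    set IBbar := ∫ σ in (0:ℝ)..1, Bbar σ • g σ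
    module
  · -- q₁' output
    have step1 : (∫ τ in (0:ℝ)..1, B τ • f ((t₀ + h) + C τ * (-h)) (Q (1 - τ)))
        = ∫ τ in (0:ℝ)..1, B τ • g (1 - τ) := by
      apply intervalIntegral.integral_congr
      intro τ hτ
      rw [huIcc] at hτ
      simp only [htime τ hτ]
    have step2 : (∫ τ in (0:ℝ)..1, B τ • g (1 - τ))
        = ∫ τ in (0:ℝ)..1, B (1 - τ) • g τ := by
      have := hflip (fun x => B (1 - x) • g x)
      simpa using this
    have step3 : (∫ τ in (0:ℝ)..1, B (1 - τ) • g τ) = ∫ τ in (0:ℝ)..1, B τ • g τ := by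
      apply intervalIntegral.integral_congr
      intro τ hτ
      rw [huIcc] at hτ
      show B (1 - τ) • g τ = B τ • g τ
      rw [← hsymB τ hτ]
    show q₀' = q₁' + (-h) • _
    rw [step1, step2, step3, hq1']
    set IB := ∫ σ in (0:ℝ)..1, B σ • g σ
    module

end
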